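/- Let $1 < a < \infty$, $0 < b < \infty$, and $c_k \ge 0$ for $k \in \mathbb{Z}$. Then there exists a constant $C = C(a,b)$ such that $\sum_{k\in\mathbb{Z}}\big(\sum_{j\in\mathbb{Z}} a^{-|j-k|} c_j\big)^b \le C \sum_{j\in\mathbb{Z}} c_j^b$. -/

import Mathlib

open ENNReal

lemma aux_rpow_tsum_le {ι : Type*} {b : ℝ} (hb : 0 < b) (hb1 : b ≤ 1) (f : ι → ℝ≥0∞) :
    (∑' i, f i) ^ b ≤ ∑' i, f i ^ b := by
  have hfin : ∀ s : Finset ι, (∑ i ∈ s, f i) ^ b ≤ ∑ i ∈ s, f i ^ b := by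
    intro s
    induction s using Finset.cons_induction with
    | empty => simp [ENNReal.zero_rpow_of_pos hb]
    | cons a s ha ih =>
        rw [Finset.sum_cons, Finset.sum_cons]
        exact le_trans (ENNReal.rpow_add_le_add_rpow _ _ hb.le hb1) (add_le_add le_rfl ih)
  have key : ∑' i, f i ≤ (∑' i, f i ^ b) ^ b⁻¹ := by
    rw [ENNReal.tsum_eq_iSup_sum]
    refine iSup_le fun s => ?_
    calc ∑ i ∈ s, f i = ((∑ i ∈ s, f i) ^ b) ^ b⁻¹ := by
          rw [← ENNReal.rpow_mul, mul_inv_cancel₀ hb.ne', ENNReal.rpow_one]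
      _ ≤ ((∑ i ∈ s, f i ^ b)) ^ b⁻¹ := ENNReal.rpow_le_rpow (hfin s) (by positivity)
      _ ≤ (∑' i, f i ^ b) ^ b⁻¹ :=
          ENNReal.rpow_le_rpow (ENNReal.sum_le_tsum s) (by positivity)
  calc (∑' i, f i) ^ b ≤ (((∑' i, f i ^ b) ^ b⁻¹)) ^ b := ENNReal.rpow_le_rpow key hb.le
    _ = ∑' i, f i ^ b := by
        rw [← ENNReal.rpow_mul, inv_mul_cancel₀ hb.ne', ENNReal.rpow_one]

lemma aux_holder {ι : Type*} {p : ℝ} (hp : 1 ≤ p) (w f : ι → ℝ≥0∞) :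
    ∑' i, w i * f i ≤ (∑' i, w i) ^ (1 - p⁻¹) * (∑' i, w i * f i ^ p) ^ p⁻¹ := by
  have hp0 : (0:ℝ) < p := lt_of_lt_of_le one_pos hp
  rw [ENNReal.tsum_eq_iSup_sum]
  refine iSup_le fun s => ?_
  refine (ENNReal.inner_le_weight_mul_Lp_of_nonneg s hp w f).trans ?_
  refine mul_le_mul' (ENNReal.rpow_le_rpow (ENNReal.sum_le_tsum s) ?_)
    (ENNReal.rpow_le_rpow (ENNReal.sum_le_tsum s) (by positivity))
  have : p⁻¹ ≤ 1 := by
    rw [inv_le_one₀ hp0]; exact hp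
  linarith

lemma aux_geo {ρ : ℝ≥0∞} (hρ : ρ < 1) : ∑' m : ℤ, ρ ^ m.natAbs < ⊤ := by
  rw [tsum_of_nat_of_neg_add_one ENNReal.summable ENNReal.summable]
  have hgeo : ∑' n : ℕ, ρ ^ n < ⊤ := by
    rw [ENNReal.tsum_geometric]
    exact ENNReal.inv_lt_top.mpr (tsub_pos_of_lt hρ)
  have h1 : ∑' n : ℕ, ρ ^ ((n : ℤ).natAbs) = ∑' n : ℕ, ρ ^ n := by simp
  have h2 : ∑' n : ℕ, ρ ^ ((-((n : ℤ) + 1)).natAbs) ≤ ∑' n : ℕ, ρ ^ n := by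
    refine ENNReal.tsum_le_tsum fun n => ?_
    have hn : (-((n : ℤ) + 1)).natAbs = n + 1 := by omega
    rw [hn, pow_succ]
    calc ρ ^ n * ρ ≤ ρ ^ n * 1 := mul_le_mul_right hρ.le _
      _ = ρ ^ n := mul_one _
  calc ∑' n : ℕ, ρ ^ ((n : ℤ).natAbs) + ∑' n : ℕ, ρ ^ ((-((n : ℤ) + 1)).natAbs)
      ≤ ∑' n : ℕ, ρ ^ n + ∑' n : ℕ, ρ ^ n := add_le_add h1.le h2
    _ < ⊤ := ENNReal.add_lt_top.mpr ⟨hgeo, hgeo⟩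

theorem summing_lemma (a : ℝ) (ha : 1 < a) (b : ℝ) (hb : 0 < b) :
    ∃ C : ℝ≥0∞, C < ⊤ ∧ ∀ c : ℤ → ℝ≥0∞,
      ∑' k : ℤ, (∑' j : ℤ, ENNReal.ofReal a ^ (-|j - k|) * c j) ^ b
        ≤ C * ∑' j : ℤ, c j ^ b := by
  set A : ℝ≥0∞ := ENNReal.ofReal a with hA
  have hA1 : 1 < A := by
    rw [hA, ← ENNReal.ofReal_one]
    exact ENNReal.ofReal_lt_ofReal_iff (lt_trans one_pos ha) |>.mpr ha
  have hAt : A ≠ ⊤ := ENNReal.ofReal_ne_top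
  have hA0 : A ≠ 0 := (lt_trans zero_lt_one hA1).ne'
  -- rpow of the weight
  have hw : ∀ (t : ℝ) (m : ℤ), (A ^ (-|m|)) ^ t = (A ^ (-t)) ^ m.natAbs := by
    intro t m
    rw [← ENNReal.rpow_intCast A (-|m|), ← ENNReal.rpow_mul, ← ENNReal.rpow_mul_natCast]
    congr 1
    rw [Nat.cast_natAbs]
    push_cast
    ring
  have hρ : ∀ t : ℝ, 0 < t → A ^ (-t) < 1 := fun t ht =>
    ENNReal.rpow_lt_one_of_one_lt_of_neg hA1 (neg_neg_of_pos ht)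
  have hS : ∀ t : ℝ, 0 < t → ∑' m : ℤ, (A ^ (-|m|)) ^ t < ⊤ := by
    intro t ht
    simp_rw [hw t]
    exact aux_geo (hρ t ht)
  have htj : ∀ (k : ℤ) (t : ℝ),
      ∑' j : ℤ, (A ^ (-|j - k|)) ^ t = ∑' m : ℤ, (A ^ (-|m|)) ^ t := by
    intro k t
    exact (Equiv.subRight k).tsum_eq (fun m : ℤ => (A ^ (-|m|)) ^ t)
  have htk : ∀ (j : ℤ) (t : ℝ),
      ∑' k : ℤ, (A ^ (-|j - k|)) ^ t = ∑' m : ℤ, (A ^ (-|m|)) ^ t := by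
    intro j t
    exact (Equiv.subLeft j).tsum_eq (fun m : ℤ => (A ^ (-|m|)) ^ t)
  rcases le_or_gt b 1 with hb1 | hb1
  · -- case b ≤ 1
    refine ⟨∑' m : ℤ, (A ^ (-|m|)) ^ b, hS b hb, fun c => ?_⟩
    calc ∑' k : ℤ, (∑' j : ℤ, A ^ (-|j - k|) * c j) ^ b
        ≤ ∑' k : ℤ, ∑' j : ℤ, (A ^ (-|j - k|) * c j) ^ b :=
          ENNReal.tsum_le_tsum fun k => aux_rpow_tsum_le hb hb1 _
      _ = ∑' k : ℤ, ∑' j : ℤ, (A ^ (-|j - k|)) ^ b * c j ^ b := by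
          simp_rw [ENNReal.mul_rpow_of_nonneg _ _ hb.le]
      _ = ∑' j : ℤ, ∑' k : ℤ, (A ^ (-|j - k|)) ^ b * c j ^ b := ENNReal.tsum_comm
      _ = ∑' j : ℤ, (∑' k : ℤ, (A ^ (-|j - k|)) ^ b) * c j ^ b := by
          simp_rw [ENNReal.tsum_mul_right]
      _ = ∑' j : ℤ, (∑' m : ℤ, (A ^ (-|m|)) ^ b) * c j ^ b :=
          tsum_congr fun j => by rw [htk j b]
      _ = (∑' m : ℤ, (A ^ (-|m|)) ^ b) * ∑' j : ℤ, c j ^ b := ENNReal.tsum_mul_left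
  · -- case 1 < b
    have hb1' : 1 ≤ b := hb1.le
    set S : ℝ≥0∞ := ∑' m : ℤ, A ^ (-|m|) with hSdef
    have hS1 : S < ⊤ := by
      have := hS 1 one_pos
      simpa [ENNReal.rpow_one] using this
    refine ⟨S ^ (b - 1) * S, ENNReal.mul_lt_top
      (ENNReal.rpow_lt_top_of_nonneg (by linarith) hS1.ne) hS1, fun c => ?_⟩
    have key : ∀ k : ℤ, (∑' j : ℤ, A ^ (-|j - k|) * c j) ^ b
        ≤ S ^ (b - 1) * ∑' j : ℤ, A ^ (-|j - k|) * c j ^ b := by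
      intro k
      have hsum : ∑' j : ℤ, A ^ (-|j - k|) = S := by
        have := htj k 1
        simpa [ENNReal.rpow_one] using this
      have h := aux_holder hb1' (fun j : ℤ => A ^ (-|j - k|)) c
      rw [hsum] at h
      have h2 := ENNReal.rpow_le_rpow h hb.le
      rw [ENNReal.mul_rpow_of_nonneg _ _ hb.le, ← ENNReal.rpow_mul, ← ENNReal.rpow_mul,
        sub_mul, one_mul, inv_mul_cancel₀ hb.ne', ENNReal.rpow_one] at h2
      calc (∑' j : ℤ, A ^ (-|j - k|) * c j) ^ b ≤ _ := h2
        _ = S ^ (b - 1) * ∑' j : ℤ, A ^ (-|j - k|) * c j ^ b := rfl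
    calc ∑' k : ℤ, (∑' j : ℤ, A ^ (-|j - k|) * c j) ^ b
        ≤ ∑' k : ℤ, S ^ (b - 1) * ∑' j : ℤ, A ^ (-|j - k|) * c j ^ b :=
          ENNReal.tsum_le_tsum key
      _ = S ^ (b - 1) * ∑' k : ℤ, ∑' j : ℤ, A ^ (-|j - k|) * c j ^ b :=
          ENNReal.tsum_mul_left
      _ = S ^ (b - 1) * ∑' j : ℤ, ∑' k : ℤ, A ^ (-|j - k|) * c j ^ b := by
          rw [ENNReal.tsum_comm]
      _ = S ^ (b - 1) * ∑' j : ℤ, (∑' k : ℤ, A ^ (-|j - k|)) * c j ^ b := by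
          simp_rw [ENNReal.tsum_mul_right]
      _ = S ^ (b - 1) * ∑' j : ℤ, S * c j ^ b := by
          refine congrArg _ (tsum_congr fun j => ?_)
          congr 1
          have := htk j 1
          simpa [ENNReal.rpow_one] using this
      _ = S ^ (b - 1) * (S * ∑' j : ℤ, c j ^ b) := by rw [ENNReal.tsum_mul_left]
      _ = S ^ (b - 1) * S * ∑' j : ℤ, c j ^ b := by rw [mul_assoc]
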